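/- Let n̂₁, n̂₂, n̂₃ ∈ ℝ³ be unit vectors that are linearly independent, and let q_{a,k} > 0 be positive reals for a ∈ {+1,−1} and k ∈ {1,2,3}. Then the function g(r) = Σ_{k=1}^{3} Σ_{a=±1} q_{a,k} · log((1 + a·(n̂ₖ · r))/2) is strictly concave on the open unit ball {r ∈ ℝ³ : ‖r‖ < 1}. -/

import Mathlib

open Matrix

private lemma dot_cs (n r : Fin 3 → ℝ) :
    |n ⬝ᵥ r| ≤ Real.sqrt (∑ i, (n i) ^ 2) * Real.sqrt (∑ i, (r i) ^ 2) := by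
  have h := abs_real_inner_le_norm ((WithLp.equiv 2 (Fin 3 → ℝ)).symm n)
    ((WithLp.equiv 2 (Fin 3 → ℝ)).symm r)
  rw [EuclideanSpace.norm_eq, EuclideanSpace.norm_eq] at h
  simpa [PiLp.inner_apply, dotProduct, Real.norm_eq_abs, sq_abs, mul_comm] using h

private lemma dot_eq_zero_all (n : Fin 3 → Fin 3 → ℝ) (hli : LinearIndependent ℝ n)
    (v : Fin 3 → ℝ) (h : ∀ k, n k ⬝ᵥ v = 0) : v = 0 := by
  have hcard : Fintype.card (Fin 3) = Module.finrank ℝ (Fin 3 → ℝ) := by simp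
  let B := basisOfLinearIndependentOfCardEqFinrank hli hcard
  have hB : ⇑B = n := coe_basisOfLinearIndependentOfCardEqFinrank hli hcard
  have hspan : ∀ w : Fin 3 → ℝ, w ⬝ᵥ v = 0 := by
    intro w
    let L : (Fin 3 → ℝ) →ₗ[ℝ] ℝ :=
      { toFun := fun u => u ⬝ᵥ v
        map_add' := fun u₁ u₂ => add_dotProduct u₁ u₂ v
        map_smul' := fun c u => smul_dotProduct c u v }
    have hw := B.sum_repr w
    have : L w = 0 := by
      have h' : ∀ k, n k 0 * v 0 + n k 1 * v 1 + n k 2 * v 2 = 0 := by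
        intro k; simpa [dotProduct, Fin.sum_univ_three] using h k
      rw [← hw, map_sum]
      simp [L, hB, smul_dotProduct, dotProduct, Fin.sum_univ_three, h']
    simpa [L] using this
  have hv : v ⬝ᵥ v = 0 := hspan v
  funext i
  have h2 : ∑ j, v j * v j = 0 := hv
  have := (Finset.sum_eq_zero_iff_of_nonneg
    (fun j _ => mul_self_nonneg (v j))).mp h2 i (Finset.mem_univ i)
  simpa [mul_self_eq_zero] using this

private lemma log_concave {p q a b : ℝ} (hp : 0 < p) (hq : 0 < q)
    (ha : 0 < a) (hb : 0 < b) (hab : a + b = 1) :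
    a * Real.log p + b * Real.log q ≤ Real.log (a * p + b * q) := by
  by_cases hpq : p = q
  · subst hpq
    have : a * p + b * p = p := by rw [← add_mul, hab, one_mul]
    rw [this, ← add_mul, hab, one_mul]
  · have := strictConcaveOn_log_Ioi.2 hp hq hpq ha hb hab
    simpa [smul_eq_mul] using this.le

private lemma log_strict {p q a b : ℝ} (hp : 0 < p) (hq : 0 < q) (hpq : p ≠ q)
    (ha : 0 < a) (hb : 0 < b) (hab : a + b = 1) :
    a * Real.log p + b * Real.log q < Real.log (a * p + b * q) := by
  have := strictConcaveOn_log_Ioi.2 hp hq hpq ha hb hab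
  simpa [smul_eq_mul] using this

theorem stmt9 (n : Fin 3 → Fin 3 → ℝ)
    (hunit : ∀ k, Real.sqrt (∑ i, (n k i) ^ 2) = 1)
    (hli : LinearIndependent ℝ n)
    (qp qm : Fin 3 → ℝ) (hqp : ∀ k, 0 < qp k) (hqm : ∀ k, 0 < qm k) :
    StrictConcaveOn ℝ {r : Fin 3 → ℝ | Real.sqrt (∑ i, (r i) ^ 2) < 1}
      (fun r => ∑ k, (qp k * Real.log ((1 + n k ⬝ᵥ r) / 2)
                    + qm k * Real.log ((1 - n k ⬝ᵥ r) / 2))) := by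
  have habs : ∀ r : Fin 3 → ℝ, Real.sqrt (∑ i, (r i) ^ 2) < 1 → ∀ k, |n k ⬝ᵥ r| < 1 := by
    intro r hr k
    calc |n k ⬝ᵥ r| ≤ Real.sqrt (∑ i, (n k i) ^ 2) * Real.sqrt (∑ i, (r i) ^ 2) := dot_cs _ _
    _ = Real.sqrt (∑ i, (r i) ^ 2) := by rw [hunit k, one_mul]
    _ < 1 := hr
  have hpos : ∀ r : Fin 3 → ℝ, Real.sqrt (∑ i, (r i) ^ 2) < 1 → ∀ k,
      0 < (1 + n k ⬝ᵥ r) / 2 ∧ 0 < (1 - n k ⬝ᵥ r) / 2 := by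
    intro r hr k
    have h := abs_lt.mp (habs r hr k)
    constructor <;> linarith [h.1, h.2]
  constructor
  · -- convexity of the set
    have : {r : Fin 3 → ℝ | Real.sqrt (∑ i, (r i) ^ 2) < 1}
        = (WithLp.linearEquiv 2 ℝ (Fin 3 → ℝ)).symm.toLinearMap ⁻¹'
          (Metric.ball (0 : EuclideanSpace ℝ (Fin 3)) 1) := by
      ext r
      simp [Metric.mem_ball, dist_zero_right, EuclideanSpace.norm_eq,
        Real.norm_eq_abs, sq_abs]
    rw [this]
    exact (convex_ball _ _).linear_preimage _
  · intro x hx y hy hxy a b ha hb hab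
    simp only [Set.mem_setOf_eq] at hx hy
    have hmemS : Real.sqrt (∑ i, ((a • x + b • y) i) ^ 2) < 1 := by
      have hconv : Convex ℝ {r : Fin 3 → ℝ | Real.sqrt (∑ i, (r i) ^ 2) < 1} := by
        have : {r : Fin 3 → ℝ | Real.sqrt (∑ i, (r i) ^ 2) < 1}
            = (WithLp.linearEquiv 2 ℝ (Fin 3 → ℝ)).symm.toLinearMap ⁻¹'
              (Metric.ball (0 : EuclideanSpace ℝ (Fin 3)) 1) := by
          ext r
          simp [Metric.mem_ball, dist_zero_right, EuclideanSpace.norm_eq,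
            Real.norm_eq_abs, sq_abs]
        rw [this]
        exact (convex_ball _ _).linear_preimage _
      exact hconv hx hy ha.le hb.le hab
    -- dot products of combination
    have hdot : ∀ k, n k ⬝ᵥ (a • x + b • y) = a * (n k ⬝ᵥ x) + b * (n k ⬝ᵥ y) := by
      intro k
      rw [dotProduct_add, dotProduct_smul, dotProduct_smul]
      simp [smul_eq_mul]
    -- exists k with differing dot products
    have hexk : ∃ k, n k ⬝ᵥ x ≠ n k ⬝ᵥ y := by
      by_contra hcon
      push_neg at hcon
      apply hxy
      have : x - y = 0 := by
        apply dot_eq_zero_all n hli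
        intro k
        rw [dotProduct_sub, hcon k, sub_self]
      exact sub_eq_zero.mp this
    obtain ⟨k₀, hk₀⟩ := hexk
    -- per-term inequalities
    set f : Fin 3 → (Fin 3 → ℝ) → ℝ := fun k r =>
      qp k * Real.log ((1 + n k ⬝ᵥ r) / 2) + qm k * Real.log ((1 - n k ⬝ᵥ r) / 2) with hf
    have key : ∀ k, (hk : n k ⬝ᵥ x ≠ n k ⬝ᵥ y → True) →
        a * f k x + b * f k y ≤ f k (a • x + b • y) := fun k _ => by
      have hpx := (hpos x hx k).1
      have hmx := (hpos x hx k).2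
      have hpy := (hpos y hy k).1
      have hmy := (hpos y hy k).2
      have e1 : (1 + n k ⬝ᵥ (a • x + b • y)) / 2
          = a * ((1 + n k ⬝ᵥ x) / 2) + b * ((1 + n k ⬝ᵥ y) / 2) := by
        rw [hdot k]; field_simp; linarith [hab]
      have e2 : (1 - n k ⬝ᵥ (a • x + b • y)) / 2
          = a * ((1 - n k ⬝ᵥ x) / 2) + b * ((1 - n k ⬝ᵥ y) / 2) := by
        rw [hdot k]; field_simp; linarith [hab]
      have l1 := log_concave hpx hpy ha hb hab
      have l2 := log_concave hmx hmy ha hb hab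
      have hq1 := (hqp k).le
      have hq2 := (hqm k).le
      simp only [hf, e1, e2]
      nlinarith [mul_le_mul_of_nonneg_left l1 hq1, mul_le_mul_of_nonneg_left l2 hq2]
    have keystrict : a * f k₀ x + b * f k₀ y < f k₀ (a • x + b • y) := by
      have hpx := (hpos x hx k₀).1
      have hmx := (hpos x hx k₀).2
      have hpy := (hpos y hy k₀).1
      have hmy := (hpos y hy k₀).2
      have e1 : (1 + n k₀ ⬝ᵥ (a • x + b • y)) / 2
          = a * ((1 + n k₀ ⬝ᵥ x) / 2) + b * ((1 + n k₀ ⬝ᵥ y) / 2) := by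
        rw [hdot k₀]; field_simp; linarith [hab]
      have e2 : (1 - n k₀ ⬝ᵥ (a • x + b • y)) / 2
          = a * ((1 - n k₀ ⬝ᵥ x) / 2) + b * ((1 - n k₀ ⬝ᵥ y) / 2) := by
        rw [hdot k₀]; field_simp; linarith [hab]
      have hne : (1 + n k₀ ⬝ᵥ x) / 2 ≠ (1 + n k₀ ⬝ᵥ y) / 2 := by
        intro hcc; exact hk₀ (by linarith)
      have l1 := log_strict hpx hpy hne ha hb hab
      have l2 := log_concave hmx hmy ha hb hab
      simp only [hf, e1, e2]
      nlinarith [mul_lt_mul_of_pos_left l1 (hqp k₀), mul_le_mul_of_nonneg_left l2 (hqm k₀).le]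
    have hsumlt : ∑ k, (a * f k x + b * f k y) < ∑ k, f k (a • x + b • y) :=
      Finset.sum_lt_sum (fun k _ => key k (fun _ => trivial)) ⟨k₀, Finset.mem_univ k₀, keystrict⟩
    calc a • (∑ k, f k x) + b • (∑ k, f k y)
        = ∑ k, (a * f k x + b * f k y) := by
          rw [smul_eq_mul, smul_eq_mul, Finset.mul_sum, Finset.mul_sum,
            ← Finset.sum_add_distrib]
    _ < ∑ k, f k (a • x + b • y) := hsumlt
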